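/- arXiv:1402.4892 — 8 statements merged into one kernel-verified Lean document; each statement's English description precedes it below -/
import Mathlib

section
/- Let a_1 ≤ a_2 ≤ … ≤ a_n and b_1 ≤ b_2 ≤ … ≤ b_n be positive reals with ∑ a_i = ∑ b_i. If there exists k with 1 ≤ k ≤ n−1 such that a_k ≤ b_1 and b_n ≤ a_{k+1}, then ∏ b_j ≥ ∏ a_i. -/
open Finset

lemma concave_log_comb {x y t s : ℝ} (hx : 0 < x) (hy : 0 < y)
    (ht : 0 ≤ t) (hs : 0 ≤ s) (hts : t + s = 1) :
    t * Real.log x + s * Real.log y ≤ Real.log (t * x + s * y) := by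
  have := strictConcaveOn_log_Ioi.concaveOn.2 (Set.mem_Ioi.2 hx) (Set.mem_Ioi.2 hy) ht hs hts
  simpa [smul_eq_mul] using this

lemma chord_lower {m M x : ℝ} (hm : 0 < m) (hmM : m < M) (h1 : m ≤ x) (h2 : x ≤ M) :
    Real.log m + (Real.log M - Real.log m) / (M - m) * (x - m) ≤ Real.log x := by
  have hM : 0 < M := hm.trans hmM
  have hd : (0:ℝ) < M - m := by linarith
  have hd' : M - m ≠ 0 := ne_of_gt hd
  set t : ℝ := (M - x) / (M - m) with htdef
  set s : ℝ := (x - m) / (M - m) with hsdef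
  have ht : 0 ≤ t := div_nonneg (by linarith) hd.le
  have hs : 0 ≤ s := div_nonneg (by linarith) hd.le
  have hts : t + s = 1 := by rw [htdef, hsdef]; field_simp; ring
  have hcomb : t * m + s * M = x := by rw [htdef, hsdef]; field_simp; ring
  have hconc := concave_log_comb hm hM ht hs hts
  rw [hcomb] at hconc
  have hid : Real.log m + (Real.log M - Real.log m) / (M - m) * (x - m)
      = t * Real.log m + s * Real.log M := by
    rw [htdef, hsdef]; field_simp; ring
  linarith

lemma chord_upper {m M x : ℝ} (hm : 0 < m) (hx : 0 < x) (hmM : m < M)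
    (hcase : x ≤ m ∨ M ≤ x) :
    Real.log x ≤ Real.log m + (Real.log M - Real.log m) / (M - m) * (x - m) := by
  have hM : 0 < M := hm.trans hmM
  rcases hcase with h | h
  · rcases eq_or_lt_of_le h with rfl | h
    · simp
    · -- x < m : write m = t*x + s*M
      have hMx : (0:ℝ) < M - x := by linarith
      have hMx' : M - x ≠ 0 := ne_of_gt hMx
      have hd' : M - m ≠ 0 := by intro h0; linarith [sub_eq_zero.mp h0]
      set t : ℝ := (M - m) / (M - x) with htdef
      set s : ℝ := (m - x) / (M - x) with hsdef
      have ht : 0 < t := div_pos (by linarith) hMx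
      have hs : 0 ≤ s := div_nonneg (by linarith) hMx.le
      have hts : t + s = 1 := by rw [htdef, hsdef]; field_simp; ring
      have hcomb : t * x + s * M = m := by rw [htdef, hsdef]; field_simp; ring
      have hconc := concave_log_comb hx hM ht.le hs hts
      rw [hcomb] at hconc
      have hid : t * (Real.log m + (Real.log M - Real.log m) / (M - m) * (x - m))
          = Real.log m - s * Real.log M := by
        rw [htdef, hsdef]; field_simp; ring
      have : t * Real.log x ≤ t * (Real.log m + (Real.log M - Real.log m) / (M - m) * (x - m)) := by
        rw [hid]; linarith
      exact le_of_mul_le_mul_left this ht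
  · rcases eq_or_lt_of_le h with rfl | h
    · have hd' : M - m ≠ 0 := by intro h0; linarith [sub_eq_zero.mp h0]
      have : Real.log m + (Real.log M - Real.log m) / (M - m) * (M - m)
          = Real.log M := by field_simp; ring
      rw [this]
    · -- M < x : write M = t*m + s*x
      have hxm : (0:ℝ) < x - m := by linarith
      have hxm' : x - m ≠ 0 := ne_of_gt hxm
      have hd' : M - m ≠ 0 := by intro h0; linarith [sub_eq_zero.mp h0]
      set t : ℝ := (x - M) / (x - m) with htdef
      set s : ℝ := (M - m) / (x - m) with hsdef
      have ht : 0 ≤ t := div_nonneg (by linarith) hxm.le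
      have hs : 0 < s := div_pos (by linarith) hxm
      have hts : t + s = 1 := by rw [htdef, hsdef]; field_simp; ring
      have hcomb : t * m + s * x = M := by rw [htdef, hsdef]; field_simp; ring
      have hconc := concave_log_comb hm hx ht hs.le hts
      rw [hcomb] at hconc
      have hid : s * (Real.log m + (Real.log M - Real.log m) / (M - m) * (x - m))
          = Real.log M - t * Real.log m := by
        rw [htdef, hsdef]; field_simp; ring
      have : s * Real.log x ≤ s * (Real.log m + (Real.log M - Real.log m) / (M - m) * (x - m)) := by
        rw [hid]; linarith
      exact le_of_mul_le_mul_left this hs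

lemma sum_log_aux {n : ℕ} (a b : Fin n → ℝ) (hapos : ∀ i, 0 < a i) (hbpos : ∀ i, 0 < b i)
    (hsum : ∑ i, a i = ∑ i, b i) (c d : ℝ)
    (hA : ∀ i, Real.log (a i) ≤ c * a i + d)
    (hB : ∀ i, c * b i + d ≤ Real.log (b i)) :
    ∏ i, a i ≤ ∏ i, b i := by
  have h1 : ∑ i, Real.log (a i) ≤ ∑ i, (c * a i + d) :=
    Finset.sum_le_sum fun i _ => hA i
  have h2 : ∑ i, (c * b i + d) ≤ ∑ i, Real.log (b i) :=
    Finset.sum_le_sum fun i _ => hB i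
  have h3 : ∑ i, (c * a i + d) = ∑ i, (c * b i + d) := by
    simp [Finset.sum_add_distrib, ← Finset.mul_sum, hsum]
  have hpa : 0 < ∏ i, a i := Finset.prod_pos fun i _ => hapos i
  have hpb : 0 < ∏ i, b i := Finset.prod_pos fun i _ => hbpos i
  rw [← Real.log_le_log_iff hpa hpb,
    Real.log_prod (fun i _ => (hapos i).ne'),
    Real.log_prod (fun i _ => (hbpos i).ne')]
  linarith

theorem stmt_0 {n : ℕ} (a b : Fin n → ℝ)
    (hapos : ∀ i, 0 < a i) (hbpos : ∀ i, 0 < b i)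
    (hamono : Monotone a) (hbmono : Monotone b)
    (hsum : ∑ i, a i = ∑ i, b i)
    (k : Fin n) (hk : (k : ℕ) + 1 < n)
    (hlow : ∀ i, a k ≤ b i)
    (hhigh : ∀ i, b i ≤ a ⟨(k : ℕ) + 1, hk⟩) :
    ∏ i, a i ≤ ∏ i, b i := by
  set m := a k with hmdef
  set M := a ⟨(k : ℕ) + 1, hk⟩ with hMdef
  have hm : 0 < m := hapos k
  have hM : 0 < M := hapos _
  have hmM : m ≤ M := hamono (by simp [Fin.le_def])
  have hasplit : ∀ i : Fin n, a i ≤ m ∨ M ≤ a i := by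
    intro i
    rcases le_or_gt (i : ℕ) (k : ℕ) with h | h
    · exact Or.inl (hamono (Fin.le_def.mpr h))
    · exact Or.inr (hamono (Fin.le_def.mpr (by simpa using h)))
  rcases eq_or_lt_of_le hmM with heq | hlt
  · -- m = M : all b i = m, use tangent line at m
    have hb : ∀ i, b i = m := fun i => le_antisymm (heq ▸ hhigh i) (hlow i)
    refine sum_log_aux a b hapos hbpos hsum (1/m) (Real.log m - 1) ?_ ?_
    · intro i
      have h := Real.log_le_sub_one_of_pos (x := a i / m) (div_pos (hapos i) hm)
      rw [Real.log_div (hapos i).ne' hm.ne'] at h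
      have : a i / m = 1/m * a i := by ring
      linarith [this ▸ h]
    · intro i
      rw [hb i]
      have : 1/m * m = 1 := by field_simp
      rw [this]; linarith
  · -- m < M : use chord
    set c : ℝ := (Real.log M - Real.log m) / (M - m) with hcdef
    refine sum_log_aux a b hapos hbpos hsum c (Real.log m - c * m) ?_ ?_
    · intro i
      have := chord_upper hm (hapos i) hlt (hasplit i)
      linarith [this]
    · intro i
      have := chord_lower hm hlt (hlow i) (hhigh i)
      linarith [this]
end

section
/- For any nonempty finite set S of channels with noise levels N_i > 0 and total power P > 0, there exists a unique water level ν(S) > min_{i∈S} N_i satisfying ∑_{i∈S} (ν(S) − N_i)^+ = P. -/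
open Finset

/-- Existence and uniqueness of the water level: there is a unique `ν`,
larger than the minimum noise level, with `∑_{i∈S} (ν − N i)⁺ = P`. -/
theorem stmt_4 {ι : Type*} [DecidableEq ι] (S : Finset ι) (hS : S.Nonempty)
    (N : ι → ℝ) (hN : ∀ i ∈ S, 0 < N i) (P : ℝ) (hP : 0 < P) :
    ∃! ν : ℝ, S.inf' hS N < ν ∧ ∑ i ∈ S, max (ν - N i) 0 = P := by
  set m := S.inf' hS N with hm
  obtain ⟨i0, hi0, hNi0⟩ := S.exists_mem_eq_inf' hS N
  set f : ℝ → ℝ := fun ν => ∑ i ∈ S, max (ν - N i) 0 with hf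
  have hcont : Continuous f := by
    apply continuous_finset_sum
    intro i _
    exact (continuous_id.sub continuous_const).max continuous_const
  have hfm : f m = 0 := by
    apply Finset.sum_eq_zero
    intro i hi
    have : m ≤ N i := S.inf'_le N hi
    simp [max_eq_right, sub_nonpos.mpr this]
  have hfP : P ≤ f (m + P) := by
    have h1 : max (m + P - N i0) 0 = P := by
      rw [← hNi0, hm]; simp [le_of_lt hP]
    calc P = max (m + P - N i0) 0 := h1.symm
      _ ≤ f (m + P) := Finset.single_le_sum (f := fun i => max (m + P - N i) 0) (fun i _ => le_max_right _ _) hi0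
  -- strict monotonicity on (m, ∞)
  have hmono : ∀ a b : ℝ, m < a → a < b → f a < f b := by
    intro a b hma hab
    apply Finset.sum_lt_sum
    · intro i _
      exact max_le_max (by linarith) le_rfl
    · refine ⟨i0, hi0, ?_⟩
      rw [← hNi0]
      rw [max_eq_left (by linarith), max_eq_left (by linarith)]
      linarith
  -- existence via IVT
  have hmem : P ∈ Set.Icc (f m) (f (m + P)) := by
    rw [hfm]; exact ⟨le_of_lt hP, hfP⟩
  obtain ⟨ν, hνIcc, hνP⟩ := intermediate_value_Icc (by linarith : m ≤ m + P)
    hcont.continuousOn hmem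
  have hνm : m < ν := by
    rcases lt_or_eq_of_le hνIcc.1 with h | h
    · exact h
    · exfalso; rw [← h] at hνP; rw [hfm] at hνP; linarith
  refine ⟨ν, ⟨hνm, hνP⟩, ?_⟩
  rintro ν' ⟨hν'm, hν'P⟩
  have hν'P : f ν' = P := hν'P
  by_contra hne
  rcases lt_or_gt_of_ne hne with h | h
  · have := hmono ν' ν hν'm h; linarith
  · have := hmono ν ν' hνm h; linarith
end

section
/- The water level is monotone nonincreasing in the channel set: if S ⊆ S′ are nonempty finite sets of channels, then ν(S′) ≤ ν(S). -/
open Finset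

/-- The water level is monotone nonincreasing in the channel set. -/
theorem stmt_5 {ι : Type*} [DecidableEq ι]
    (N : ι → ℝ) (hN : ∀ i, 0 < N i) (P : ℝ) (hP : 0 < P)
    (ν : Finset ι → ℝ)
    (hν : ∀ A : Finset ι, A.Nonempty → ∑ i ∈ A, max (ν A - N i) 0 = P)
    (S S' : Finset ι) (hSne : S.Nonempty) (hsub : S ⊆ S') :
    ν S' ≤ ν S := by
  by_contra h
  push_neg at h
  have hS'ne : S'.Nonempty := hSne.mono hsub
  have hS := hν S hSne
  have hS' := hν S' hS'ne
  -- exists i ∈ S with positive term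
  have hex : ∃ i ∈ S, 0 < max (ν S - N i) 0 := by
    by_contra hc
    push_neg at hc
    have : ∑ i ∈ S, max (ν S - N i) 0 ≤ 0 :=
      Finset.sum_nonpos hc
    linarith
  obtain ⟨i, hiS, hipos⟩ := hex
  have hstrict : ∑ j ∈ S, max (ν S - N j) 0 < ∑ j ∈ S, max (ν S' - N j) 0 := by
    apply Finset.sum_lt_sum
    · intro j _
      exact max_le_max (by linarith) le_rfl
    · refine ⟨i, hiS, ?_⟩
      have h1 : max (ν S - N i) 0 = ν S - N i := by
        rw [max_eq_left]
        · rw [max_eq_left (le_of_lt ?_)] at hipos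
          · linarith
          · cases lt_or_ge 0 (ν S - N i) with
            | inl h' => exact h'
            | inr h' => simp [max_eq_right h'] at hipos
      rw [h1]
      calc ν S - N i < ν S' - N i := by linarith
        _ ≤ max (ν S' - N i) 0 := le_max_left _ _
  have hmono : ∑ j ∈ S, max (ν S' - N j) 0 ≤ ∑ j ∈ S', max (ν S' - N j) 0 :=
    Finset.sum_le_sum_of_subset_of_nonneg hsub (fun j _ _ => le_max_right _ _)
  linarith
end

section
/- The waterfilling rate function R*(S) = ∑_{i∈S} log(1 + (ν(S) − N_i)^+ / N_i) is monotone nondecreasing: if S ⊆ S′ then R*(S) ≤ R*(S′). -/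
open Finset

private lemma key_ineq (N p ν' : ℝ) (hN : 0 < N) (hp : 0 ≤ p) (hν : 0 < ν') :
    Real.log (1 + p / N) ≤
      Real.log (1 + max (ν' - N) 0 / N) + (p - max (ν' - N) 0) / ν' := by
  set q : ℝ := max (ν' - N) 0 with hq
  have hq0 : 0 ≤ q := le_max_right _ _
  have h1 : 1 + p / N = (N + p) / N := by field_simp
  have h2 : 1 + q / N = (N + q) / N := by field_simp
  have hNp : 0 < N + p := by linarith
  have hNq : 0 < N + q := by linarith
  rw [h1, h2, Real.log_div hNp.ne' hN.ne', Real.log_div hNq.ne' hN.ne']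
  have hlog : Real.log (N + p) - Real.log (N + q) ≤ (N + p) / (N + q) - 1 := by
    have h := Real.log_le_sub_one_of_pos (show 0 < (N + p) / (N + q) by positivity)
    rwa [Real.log_div hNp.ne' hNq.ne'] at h
  have hfrac : (N + p) / (N + q) - 1 = (p - q) / (N + q) := by field_simp; ring
  have hle : (p - q) / (N + q) ≤ (p - q) / ν' := by
    rcases le_or_gt (ν' - N) 0 with h | h
    · have hq' : q = 0 := max_eq_right h
      rw [hq', add_zero, sub_zero]
      have hνN : ν' ≤ N := by linarith
      gcongr
    · have hq' : q = ν' - N := max_eq_left h.le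
      rw [hq']
      have he : N + (ν' - N) = ν' := by ring
      rw [he]
  linarith

/-- The waterfilling rate `R*(S) = ∑_{i∈S} log(1 + (ν(S) − N i)⁺ / N i)`
is monotone nondecreasing in the channel set. -/
theorem stmt_6 {ι : Type*} [DecidableEq ι]
    (N : ι → ℝ) (hN : ∀ i, 0 < N i) (P : ℝ) (hP : 0 < P)
    (ν : Finset ι → ℝ)
    (hν : ∀ A : Finset ι, A.Nonempty → ∑ i ∈ A, max (ν A - N i) 0 = P)
    (S S' : Finset ι) (hsub : S ⊆ S') :
    ∑ i ∈ S, Real.log (1 + max (ν S - N i) 0 / N i) ≤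
      ∑ i ∈ S', Real.log (1 + max (ν S' - N i) 0 / N i) := by
  rcases S.eq_empty_or_nonempty with rfl | hSne
  · simp only [Finset.sum_empty]
    refine Finset.sum_nonneg fun i _ => Real.log_nonneg ?_
    have h1 : 0 ≤ max (ν S' - N i) 0 / N i := div_nonneg (le_max_right _ _) (hN i).le
    linarith
  · have hS'ne : S'.Nonempty := hSne.mono hsub
    have hsum' := hν S' hS'ne
    have hsumS := hν S hSne
    have hν'pos : 0 < ν S' := by
      by_contra h
      push_neg at h
      have hz : ∑ i ∈ S', max (ν S' - N i) 0 = 0 :=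
        Finset.sum_eq_zero fun i _ => max_eq_right (by linarith [hN i])
      rw [hz] at hsum'; linarith
    set p : ι → ℝ := fun i => if i ∈ S then max (ν S - N i) 0 else 0 with hpdef
    have hpsum : ∑ i ∈ S', p i = P := by
      rw [← hsumS]
      rw [← Finset.sum_subset hsub (fun i _ hi => by simp [hpdef, hi])]
      exact Finset.sum_congr rfl fun i hi => by simp [hpdef, hi]
    have hLHS : ∑ i ∈ S, Real.log (1 + max (ν S - N i) 0 / N i)
        = ∑ i ∈ S', Real.log (1 + p i / N i) := by
      rw [← Finset.sum_subset hsub (fun i _ hi => by simp [hpdef, hi])]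
      exact Finset.sum_congr rfl fun i hi => by simp [hpdef, hi]
    rw [hLHS]
    have hstep : ∑ i ∈ S', Real.log (1 + p i / N i) ≤
        ∑ i ∈ S', (Real.log (1 + max (ν S' - N i) 0 / N i)
          + (p i - max (ν S' - N i) 0) / ν S') := by
      refine Finset.sum_le_sum fun i _ => ?_
      refine key_ineq (N i) (p i) (ν S') (hN i) ?_ hν'pos
      by_cases hi : i ∈ S <;> simp [hpdef, hi, le_max_right]
    have hzero : ∑ i ∈ S', (p i - max (ν S' - N i) 0) / ν S' = 0 := by
      rw [← Finset.sum_div, Finset.sum_sub_distrib, hpsum, hsum', sub_self, zero_div]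
    calc ∑ i ∈ S', Real.log (1 + p i / N i)
        ≤ ∑ i ∈ S', (Real.log (1 + max (ν S' - N i) 0 / N i)
            + (p i - max (ν S' - N i) 0) / ν S') := hstep
      _ = ∑ i ∈ S', Real.log (1 + max (ν S' - N i) 0 / N i) := by
          rw [Finset.sum_add_distrib, hzero, add_zero]
end

section
/- The waterfilling function R* is submodular: for all S, T ⊆ U, R*(S) + R*(T) ≥ R*(S∩T) + R*(S∪T). -/
open Finset

private lemma max_sub_zero (x y : ℝ) : max (x - y) 0 = max x y - y := by
  rcases le_total x y with h | h
  · rw [max_eq_right (by linarith : x - y ≤ 0), max_eq_right h]; ring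
  · rw [max_eq_left (by linarith : (0:ℝ) ≤ x - y), max_eq_left h]

private lemma one_sub_inv_le_log {x : ℝ} (hx : 0 < x) : 1 - x⁻¹ ≤ Real.log x := by
  have h := Real.log_le_sub_one_of_pos (inv_pos.mpr hx)
  rw [Real.log_inv] at h; linarith

private lemma duality_pt {N μ ν : ℝ} (hN : 0 < N) (hμ : 0 < μ) :
    Real.log (max ν N) - Real.log (max μ N) ≤ (max (ν - N) 0 - max (μ - N) 0) / μ := by
  have hV : 0 < max ν N := lt_of_lt_of_le hN (le_max_right _ _)
  rcases le_total N μ with h | h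
  · rw [max_eq_left h, max_sub_zero, max_eq_left (by linarith : (0:ℝ) ≤ μ - N)]
    have h2 := Real.log_le_sub_one_of_pos (div_pos hV hμ)
    rw [Real.log_div hV.ne' hμ.ne'] at h2
    have h3 : (max ν N - N - (μ - N)) / μ = max ν N / μ - 1 := by field_simp; ring
    linarith
  · rw [max_eq_right h, max_sub_zero, max_eq_right (by linarith : μ - N ≤ 0)]
    have h2 := Real.log_le_sub_one_of_pos (div_pos hV hN)
    rw [Real.log_div hV.ne' hN.ne'] at h2
    have h4 : 0 ≤ max ν N - N := by simp [le_max_right]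
    have h5 : (max ν N - N) / N ≤ (max ν N - N) / μ := by gcongr
    have h3 : (max ν N - N) / N = max ν N / N - 1 := by field_simp
    have h6 : (max ν N - N - 0) / μ = (max ν N - N) / μ := by ring
    linarith

private lemma mono_pt {N a b : ℝ} (hN : 0 < N) (ha : 0 < a) (hab : a ≤ b) :
    Real.log (max a N) - max (a - N) 0 / a ≤ Real.log (max b N) - max (b - N) 0 / b := by
  have hb : 0 < b := lt_of_lt_of_le ha hab
  rcases le_total b N with h | h
  · rw [max_eq_right h, max_eq_right (le_trans hab h),
      max_eq_right (by linarith : a - N ≤ 0), max_eq_right (by linarith : b - N ≤ 0)]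
    simp
  · rw [max_eq_left h, max_eq_left (by linarith : (0:ℝ) ≤ b - N)]
    rcases le_total a N with h2 | h2
    · rw [max_eq_right h2, max_eq_right (by linarith : a - N ≤ 0), zero_div]
      have h3 := one_sub_inv_le_log (div_pos hb hN)
      rw [Real.log_div hb.ne' hN.ne'] at h3
      have h4 : (b / N)⁻¹ = N / b := by field_simp
      rw [h4] at h3
      have h5 : (b - N) / b = 1 - N / b := by field_simp
      linarith
    · rw [max_eq_left h2, max_eq_left (by linarith : (0:ℝ) ≤ a - N)]
      have h3 := one_sub_inv_le_log (div_pos hb ha)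
      rw [Real.log_div hb.ne' ha.ne'] at h3
      have h4 : (b / a)⁻¹ = a / b := by field_simp
      rw [h4] at h3
      have h5 : (a - N) / a = 1 - N / a := by field_simp
      have h6 : (b - N) / b = 1 - N / b := by field_simp
      have h7 : N / a - N / b ≤ 1 - a / b := by
        have e1 : N / a - N / b = N * (b - a) / (a * b) := by field_simp
        have e2 : 1 - a / b = a * (b - a) / (a * b) := by field_simp
        have e3 : N * (b - a) ≤ a * (b - a) :=
          mul_le_mul_of_nonneg_right h2 (by linarith)
        rw [e1, e2]
        exact (div_le_div_iff_of_pos_right (by positivity)).mpr e3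
      linarith

private lemma level_pos {ι : Type*} (N : ι → ℝ) (hN : ∀ i, 0 < N i) {P w : ℝ}
    (hP : 0 < P) (A : Finset ι) (hw : ∑ i ∈ A, max (w - N i) 0 = P) : 0 < w := by
  by_contra h
  push_neg at h
  have h0 : ∑ i ∈ A, max (w - N i) 0 = 0 :=
    Finset.sum_eq_zero fun i _ => max_eq_right (by linarith [hN i])
  linarith

private lemma summand_eq {N w : ℝ} (hN : 0 < N) :
    Real.log (1 + max (w - N) 0 / N) = Real.log (max w N) - Real.log N := by
  have h1 : 1 + max (w - N) 0 / N = max w N / N := by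
    rw [max_sub_zero]; field_simp; ring
  rw [h1, Real.log_div (lt_of_lt_of_le hN (le_max_right _ _)).ne' hN.ne']

private lemma duality_sum {ι : Type*} (N : ι → ℝ) (hN : ∀ i, 0 < N i)
    {P μ w : ℝ} (hμ : 0 < μ)
    (A : Finset ι) (hw : ∑ i ∈ A, max (w - N i) 0 = P) :
    ∑ i ∈ A, (Real.log (max w (N i)) - Real.log (N i)) ≤
    ∑ i ∈ A, (Real.log (max μ (N i)) - Real.log (N i)) +
      (P - ∑ i ∈ A, max (μ - N i) 0) / μ := by
  have h1 : ∑ i ∈ A, (Real.log (max w (N i)) - Real.log (max μ (N i))) ≤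
      ∑ i ∈ A, (max (w - N i) 0 - max (μ - N i) 0) / μ :=
    Finset.sum_le_sum fun i _ => duality_pt (hN i) hμ
  have hsplit : ∑ i ∈ A, (max (w - N i) 0 - max (μ - N i) 0) =
      P - ∑ i ∈ A, max (μ - N i) 0 := by
    rw [Finset.sum_sub_distrib, hw]
  rw [← Finset.sum_div, hsplit] at h1
  have h2 : ∑ i ∈ A, (Real.log (max w (N i)) - Real.log (N i)) -
      ∑ i ∈ A, (Real.log (max μ (N i)) - Real.log (N i)) =
      ∑ i ∈ A, (Real.log (max w (N i)) - Real.log (max μ (N i))) := by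
    rw [← Finset.sum_sub_distrib]
    exact Finset.sum_congr rfl fun i _ => by ring
  linarith

private lemma key {ι : Type*} [DecidableEq ι]
    (N : ι → ℝ) (hN : ∀ i, 0 < N i) (P : ℝ) (hP : 0 < P)
    (ν : Finset ι → ℝ)
    (hν : ∀ A : Finset ι, A.Nonempty → ∑ i ∈ A, max (ν A - N i) 0 = P)
    (S T : Finset ι) (hS : S.Nonempty) (hT : T.Nonempty) (hab : ν S ≤ ν T) :
    (∑ i ∈ S ∩ T, Real.log (1 + max (ν (S ∩ T) - N i) 0 / N i)) +
      (∑ i ∈ S ∪ T, Real.log (1 + max (ν (S ∪ T) - N i) 0 / N i)) ≤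
    (∑ i ∈ S, Real.log (1 + max (ν S - N i) 0 / N i)) +
      (∑ i ∈ T, Real.log (1 + max (ν T - N i) 0 / N i)) := by
  have hSsum := hν S hS
  have hTsum := hν T hT
  have ha : 0 < ν S := level_pos N hN hP S hSsum
  have hb : 0 < ν T := level_pos N hN hP T hTsum
  have rw1 : ∀ (A : Finset ι) (w : ℝ),
      ∑ i ∈ A, Real.log (1 + max (w - N i) 0 / N i) =
      ∑ i ∈ A, (Real.log (max w (N i)) - Real.log (N i)) :=
    fun A w => Finset.sum_congr rfl fun i _ => summand_eq (hN i)
  rw [rw1, rw1, rw1, rw1]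
  -- split lemmas
  have hsplitU : ∀ f : ι → ℝ, ∑ i ∈ S ∪ T, f i = ∑ i ∈ S, f i + ∑ i ∈ T \ S, f i := by
    intro f
    rw [← Finset.union_sdiff_self_eq_union, Finset.sum_union Finset.disjoint_sdiff]
  have hsplitT : ∀ f : ι → ℝ, ∑ i ∈ T, f i = ∑ i ∈ S ∩ T, f i + ∑ i ∈ T \ S, f i := by
    intro f
    rw [← Finset.sum_inter_add_sum_sdiff T S f, Finset.inter_comm]
  -- duality for S ∪ T at level ν S
  have hUne : (S ∪ T).Nonempty := hS.mono Finset.subset_union_left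
  have hU := duality_sum N hN ha (S ∪ T) (hν _ hUne)
  -- duality for S ∩ T at level ν T
  have hI : ∑ i ∈ S ∩ T, (Real.log (max (ν (S ∩ T)) (N i)) - Real.log (N i)) ≤
      ∑ i ∈ S ∩ T, (Real.log (max (ν T) (N i)) - Real.log (N i)) +
        (P - ∑ i ∈ S ∩ T, max (ν T - N i) 0) / ν T := by
    rcases (S ∩ T).eq_empty_or_nonempty with hE | hNe
    · rw [hE]
      simp only [Finset.sum_empty, sub_zero, zero_add]
      positivity
    · exact duality_sum N hN hb (S ∩ T) (hν _ hNe)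
  -- monotonicity over T \ S
  have hMono : ∑ i ∈ T \ S, (Real.log (max (ν S) (N i)) - max (ν S - N i) 0 / ν S) ≤
      ∑ i ∈ T \ S, (Real.log (max (ν T) (N i)) - max (ν T - N i) 0 / ν T) :=
    Finset.sum_le_sum fun i _ => mono_pt (hN i) ha hab
  rw [Finset.sum_sub_distrib, Finset.sum_sub_distrib, ← Finset.sum_div, ← Finset.sum_div] at hMono
  -- rewrite the duality remainder terms
  have hUP : ∑ i ∈ S ∪ T, max (ν S - N i) 0 = P + ∑ i ∈ T \ S, max (ν S - N i) 0 := by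
    rw [hsplitU fun i => max (ν S - N i) 0, hSsum]
  have hIP : ∑ i ∈ S ∩ T, max (ν T - N i) 0 = P - ∑ i ∈ T \ S, max (ν T - N i) 0 := by
    have := hsplitT fun i => max (ν T - N i) 0
    rw [hTsum] at this
    linarith
  rw [hUP] at hU
  rw [hIP] at hI
  have eU : (P - (P + ∑ i ∈ T \ S, max (ν S - N i) 0)) / ν S =
      -((∑ i ∈ T \ S, max (ν S - N i) 0) / ν S) := by
    rw [show P - (P + ∑ i ∈ T \ S, max (ν S - N i) 0) = -(∑ i ∈ T \ S, max (ν S - N i) 0) by ring,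
      neg_div]
  have eI : (P - (P - ∑ i ∈ T \ S, max (ν T - N i) 0)) / ν T =
      (∑ i ∈ T \ S, max (ν T - N i) 0) / ν T := by
    rw [show P - (P - ∑ i ∈ T \ S, max (ν T - N i) 0) = ∑ i ∈ T \ S, max (ν T - N i) 0 by ring]
  rw [eU] at hU
  rw [eI] at hI
  -- split the L-sums
  have hUL := hsplitU fun i => Real.log (max (ν S) (N i)) - Real.log (N i)
  have hTL := hsplitT fun i => Real.log (max (ν T) (N i)) - Real.log (N i)
  have eDA : ∑ i ∈ T \ S, (Real.log (max (ν S) (N i)) - Real.log (N i)) =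
      ∑ i ∈ T \ S, Real.log (max (ν S) (N i)) - ∑ i ∈ T \ S, Real.log (N i) :=
    Finset.sum_sub_distrib _ _
  have eDB : ∑ i ∈ T \ S, (Real.log (max (ν T) (N i)) - Real.log (N i)) =
      ∑ i ∈ T \ S, Real.log (max (ν T) (N i)) - ∑ i ∈ T \ S, Real.log (N i) :=
    Finset.sum_sub_distrib _ _
  linarith

/-- The waterfilling function `R*` is submodular. -/
theorem stmt_11 {ι : Type*} [DecidableEq ι]
    (N : ι → ℝ) (hN : ∀ i, 0 < N i) (P : ℝ) (hP : 0 < P)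
    (ν : Finset ι → ℝ)
    (hν : ∀ A : Finset ι, A.Nonempty → ∑ i ∈ A, max (ν A - N i) 0 = P)
    (S T : Finset ι) :
    (∑ i ∈ S ∩ T, Real.log (1 + max (ν (S ∩ T) - N i) 0 / N i)) +
      (∑ i ∈ S ∪ T, Real.log (1 + max (ν (S ∪ T) - N i) 0 / N i)) ≤
    (∑ i ∈ S, Real.log (1 + max (ν S - N i) 0 / N i)) +
      (∑ i ∈ T, Real.log (1 + max (ν T - N i) 0 / N i)) := by
  rcases S.eq_empty_or_nonempty with rfl | hS
  · simp
  rcases T.eq_empty_or_nonempty with rfl | hT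
  · simp
  rcases le_total (ν S) (ν T) with h | h
  · exact key N hN P hP ν hν S T hS hT h
  · have h2 := key N hN P hP ν hν T S hT hS h
    rw [Finset.inter_comm, Finset.union_comm] at h2
    linarith
end

section
/- If i,j ∉ S are distinct and i ∉ T(S∪{i,j}) (i.e., channel i receives zero power in the waterfilling over S∪{i,j}), then ν(S∪{i,j}) = ν(S∪{j}) and R*(S∪{i,j}) = R*(S∪{j}). -/
open Finset

lemma waterfill_mono {ι : Type*} (N : ι → ℝ) (B : Finset ι) {x y P : ℝ}
    (hP : 0 < P) (hxy : x < y)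
    (hy : ∑ k ∈ B, max (y - N k) 0 = P) :
    ∑ k ∈ B, max (x - N k) 0 < ∑ k ∈ B, max (y - N k) 0 := by
  have hex : ∃ k ∈ B, 0 < max (y - N k) 0 := by
    by_contra h
    push_neg at h
    have : ∑ k ∈ B, max (y - N k) 0 = 0 := by
      apply Finset.sum_eq_zero
      intro k hk
      exact le_antisymm (h k hk) (le_max_right _ _)
    linarith
  obtain ⟨k, hkB, hk⟩ := hex
  apply Finset.sum_lt_sum
  · intro l _
    exact max_le_max (by linarith) le_rfl
  · refine ⟨k, hkB, ?_⟩
    have hyk : 0 < y - N k := by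
      rcases le_or_gt (y - N k) 0 with h | h
      · simp [max_eq_right h] at hk
      · exact h
    rcases le_or_gt (x - N k) 0 with h | h
    · rw [max_eq_right h, max_eq_left hyk.le]; exact hyk
    · rw [max_eq_left h.le, max_eq_left hyk.le]; linarith

lemma waterfill_unique {ι : Type*} (N : ι → ℝ) (B : Finset ι) {x y P : ℝ}
    (hP : 0 < P)
    (hx : ∑ k ∈ B, max (x - N k) 0 = P)
    (hy : ∑ k ∈ B, max (y - N k) 0 = P) : x = y := by
  rcases lt_trichotomy x y with h | h | h
  · have := waterfill_mono N B hP h hy; linarith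
  · exact h
  · have := waterfill_mono N B hP h hx; linarith

/-- If channel `i` receives zero power in the waterfilling over `S∪{i,j}`,
then `ν(S∪{i,j}) = ν(S∪{j})` and `R*(S∪{i,j}) = R*(S∪{j})`. -/
theorem stmt_13 {ι : Type*} [DecidableEq ι]
    (N : ι → ℝ) (hN : ∀ i, 0 < N i) (P : ℝ) (hP : 0 < P)
    (ν : Finset ι → ℝ)
    (hν : ∀ A : Finset ι, A.Nonempty → ∑ i ∈ A, max (ν A - N i) 0 = P)
    (S : Finset ι) (hS : S.Nonempty) (i j : ι) (hij : i ≠ j)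
    (hi : i ∉ S) (hj : j ∉ S)
    (hzero : ¬ N i < ν (insert i (insert j S))) :
    ν (insert i (insert j S)) = ν (insert j S) ∧
    (∑ k ∈ (insert i (insert j S)).filter
        (fun k => N k < ν (insert i (insert j S))),
      Real.log (ν (insert i (insert j S)) / N k)) =
    (∑ k ∈ (insert j S).filter (fun k => N k < ν (insert j S)),
      Real.log (ν (insert j S) / N k)) := by
  set A := insert i (insert j S) with hA
  set B := insert j S with hB
  have hiB : i ∉ B := by simp [hB, hij, hi]
  have hAB : A = insert i B := rfl
  have hAne : A.Nonempty := insert_nonempty _ _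
  have hBne : B.Nonempty := insert_nonempty _ _
  have hsumA := hν A hAne
  rw [hAB, Finset.sum_insert hiB] at hsumA
  have hmaxi : max (ν A - N i) 0 = 0 := max_eq_right (by push_neg at hzero; linarith)
  rw [hmaxi, zero_add] at hsumA
  have hEq : ν A = ν B := waterfill_unique N B hP hsumA (hν B hBne)
  refine ⟨hEq, ?_⟩
  have hfilter : A.filter (fun k => N k < ν A) = B.filter (fun k => N k < ν B) := by
    rw [hAB, Finset.filter_insert, if_neg hzero, hEq]
  rw [hfilter, hEq]
end

section
/- With the notation T_i = T(S∪{i}), T_j = T(S∪{j}), T = T(S), T_{ij} = T(S∪{i,j}), Ĥ = T∖T_j, Ĥ_i = (T_i∖{i})∖(T_{ij}∖{i,j}), and assuming i ∈ T_i, j ∈ T_j, i,j ∈ T_{ij}: |T_i|ν_i + |T_j|ν_j + ∑_{l∈Ĥ} N_l = |T|ν + |T_{ij}|ν_{ij} + ∑_{m∈Ĥ_i} N_m, and |T_i| + |T_j| + |Ĥ| = |T| + |T_{ij}| + |Ĥ_i|. -/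
open Finset

/-- The set of channels receiving nonzero power. -/
noncomputable def Tset {ι : Type*} [DecidableEq ι] (N : ι → ℝ) (ν : Finset ι → ℝ)
    (A : Finset ι) : Finset ι :=
  A.filter (fun k => N k < ν A)

section Aux

variable {ι : Type*} [DecidableEq ι] (N : ι → ℝ) (ν : Finset ι → ℝ)

lemma sum_max_eq (A : Finset ι) :
    ∑ k ∈ A, max (ν A - N k) 0 = ∑ k ∈ Tset N ν A, (ν A - N k) := by
  rw [Tset, sum_filter]
  refine sum_congr rfl fun k _ => ?_
  by_cases h : N k < ν A
  · simp [h, max_eq_left (by linarith : (0:ℝ) ≤ ν A - N k)]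
  · simp [h, max_eq_right (by push_neg at h; linarith : ν A - N k ≤ (0:ℝ))]

lemma card_mul_nu (P : ℝ)
    (hν : ∀ A : Finset ι, A.Nonempty → ∑ i ∈ A, max (ν A - N i) 0 = P)
    (A : Finset ι) (hA : A.Nonempty) :
    ((Tset N ν A).card : ℝ) * ν A = P + ∑ k ∈ Tset N ν A, N k := by
  have h := hν A hA
  rw [sum_max_eq, Finset.sum_sub_distrib, sum_const, nsmul_eq_mul] at h
  linarith

lemma nu_insert_le (P : ℝ)
    (hν : ∀ A : Finset ι, A.Nonempty → ∑ i ∈ A, max (ν A - N i) 0 = P)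
    (A : Finset ι) (hA : A.Nonempty) (a : ι) (ha : a ∉ A)
    (haT : a ∈ Tset N ν (insert a A)) : ν (insert a A) ≤ ν A := by
  by_contra h
  push_neg at h
  have h1 := hν A hA
  have h2 := hν (insert a A) (insert_nonempty _ _)
  rw [sum_insert ha] at h2
  have hNa : N a < ν (insert a A) := (mem_filter.mp haT).2
  have hsum : ∑ k ∈ A, max (ν A - N k) 0 ≤ ∑ k ∈ A, max (ν (insert a A) - N k) 0 :=
    sum_le_sum fun k _ => max_le_max (by linarith) le_rfl
  have hmax : max (ν (insert a A) - N a) 0 = ν (insert a A) - N a :=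
    max_eq_left (by linarith)
  linarith

lemma sdiff_insert_eq (P : ℝ)
    (hν : ∀ A : Finset ι, A.Nonempty → ∑ i ∈ A, max (ν A - N i) 0 = P)
    (A : Finset ι) (hA : A.Nonempty) (a : ι) (ha : a ∉ A)
    (haT : a ∈ Tset N ν (insert a A)) :
    Tset N ν (insert a A) \ Tset N ν A = {a} := by
  have hle := nu_insert_le N ν P hν A hA a ha haT
  ext k
  simp only [mem_sdiff, mem_singleton]
  constructor
  · rintro ⟨hk, hk2⟩
    by_contra hka
    have hk' := mem_filter.mp hk
    have hkA : k ∈ A := by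
      rcases mem_insert.mp hk'.1 with h | h
      · exact absurd h hka
      · exact h
    exact hk2 (mem_filter.mpr ⟨hkA, lt_of_lt_of_le hk'.2 hle⟩)
  · rintro rfl
    exact ⟨haT, fun hk => ha ((mem_filter.mp hk).1)⟩

end Aux

/-- Counting and sum identities for the sets of active channels. -/
theorem stmt_15 {ι : Type*} [DecidableEq ι]
    (N : ι → ℝ) (hN : ∀ i, 0 < N i) (P : ℝ) (hP : 0 < P)
    (ν : Finset ι → ℝ)
    (hν : ∀ A : Finset ι, A.Nonempty → ∑ i ∈ A, max (ν A - N i) 0 = P)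
    (S : Finset ι) (hS : S.Nonempty) (i j : ι) (hij : i ≠ j)
    (hi : i ∉ S) (hj : j ∉ S)
    (hiTi : i ∈ Tset N ν (insert i S))
    (hjTj : j ∈ Tset N ν (insert j S))
    (hiTij : i ∈ Tset N ν (insert i (insert j S)))
    (hjTij : j ∈ Tset N ν (insert i (insert j S))) :
    (((Tset N ν (insert i S)).card : ℝ) * ν (insert i S)
      + ((Tset N ν (insert j S)).card : ℝ) * ν (insert j S)
      + ∑ l ∈ Tset N ν S \ Tset N ν (insert j S), N l
      = ((Tset N ν S).card : ℝ) * ν S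
      + ((Tset N ν (insert i (insert j S))).card : ℝ) * ν (insert i (insert j S))
      + ∑ m ∈ (Tset N ν (insert i S) \ {i})
            \ (Tset N ν (insert i (insert j S)) \ {i, j}), N m) ∧
    ((Tset N ν (insert i S)).card + (Tset N ν (insert j S)).card
      + (Tset N ν S \ Tset N ν (insert j S)).card
      = (Tset N ν S).card + (Tset N ν (insert i (insert j S))).card
      + ((Tset N ν (insert i S) \ {i})
            \ (Tset N ν (insert i (insert j S)) \ {i, j})).card) := by
  set T := Tset N ν S with hT
  set Ti := Tset N ν (insert i S) with hTi
  set Tj := Tset N ν (insert j S) with hTj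
  set Tij := Tset N ν (insert i (insert j S)) with hTij
  have hcomm : insert i (insert j S) = insert j (insert i S) := Finset.insert_comm i j S
  have hjiS : j ∉ insert i S := by
    simp only [mem_insert]
    rintro (h | h)
    · exact hij.symm h
    · exact hj h
  -- E1 : Tj \ T = {j}
  have hE1 : Tj \ T = {j} := sdiff_insert_eq N ν P hν S hS j hj hjTj
  -- E2 : Tij \ Ti = {j}
  have hE2 : Tij \ Ti = {j} := by
    rw [hTij, hcomm]
    exact sdiff_insert_eq N ν P hν (insert i S) (insert_nonempty _ _) j hjiS
      (by rw [← hcomm]; exact hjTij)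
  -- E3 : (Ti \ {i}) \ (Tij \ {i,j}) = Ti \ Tij
  have hE3 : (Ti \ {i}) \ (Tij \ {i, j}) = Ti \ Tij := by
    ext k
    simp only [mem_sdiff, mem_singleton, mem_insert, not_and, not_not]
    constructor
    · rintro ⟨⟨hkTi, hki⟩, h2⟩
      refine ⟨hkTi, fun hkTij => ?_⟩
      have hkS : k ∈ S := by
        have := (mem_filter.mp hkTi).1
        rcases mem_insert.mp this with h | h
        · exact absurd h hki
        · exact h
      have hkj : k ≠ j := fun h => hj (h ▸ hkS)
      exact hkj (by tauto)
    · rintro ⟨hkTi, hkTij⟩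
      have hki : k ≠ i := fun h => hkTij (h ▸ hiTij)
      exact ⟨⟨hkTi, hki⟩, fun h => absurd h hkTij⟩
  rw [hE3]
  -- water-filling identities
  have h1 := card_mul_nu N ν P hν S hS
  have h2 := card_mul_nu N ν P hν (insert i S) (insert_nonempty _ _)
  have h3 := card_mul_nu N ν P hν (insert j S) (insert_nonempty _ _)
  have h4 := card_mul_nu N ν P hν (insert i (insert j S)) (insert_nonempty _ _)
  rw [← hT] at h1
  rw [← hTi] at h2
  rw [← hTj] at h3
  rw [← hTij] at h4
  -- sum splits
  have sT : ∑ k ∈ T ∩ Tj, N k + ∑ k ∈ T \ Tj, N k = ∑ k ∈ T, N k :=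
    Finset.sum_inter_add_sum_sdiff T Tj N
  have sj : ∑ k ∈ Tj ∩ T, N k + ∑ k ∈ Tj \ T, N k = ∑ k ∈ Tj, N k :=
    Finset.sum_inter_add_sum_sdiff Tj T N
  have si : ∑ k ∈ Ti ∩ Tij, N k + ∑ k ∈ Ti \ Tij, N k = ∑ k ∈ Ti, N k :=
    Finset.sum_inter_add_sum_sdiff Ti Tij N
  have sij : ∑ k ∈ Tij ∩ Ti, N k + ∑ k ∈ Tij \ Ti, N k = ∑ k ∈ Tij, N k :=
    Finset.sum_inter_add_sum_sdiff Tij Ti N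
  rw [hE1, sum_singleton] at sj
  rw [hE2, sum_singleton] at sij
  rw [inter_comm] at sj
  rw [inter_comm] at sij
  constructor
  · linarith
  · -- cardinalities
    have cT : (T ∩ Tj).card + (T \ Tj).card = T.card :=
      Finset.card_inter_add_card_sdiff T Tj
    have cj : (Tj ∩ T).card + (Tj \ T).card = Tj.card :=
      Finset.card_inter_add_card_sdiff Tj T
    have ci : (Ti ∩ Tij).card + (Ti \ Tij).card = Ti.card :=
      Finset.card_inter_add_card_sdiff Ti Tij
    have cij : (Tij ∩ Ti).card + (Tij \ Ti).card = Tij.card :=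
      Finset.card_inter_add_card_sdiff Tij Ti
    rw [hE1, card_singleton] at cj
    rw [hE2, card_singleton] at cij
    rw [inter_comm] at cj
    rw [inter_comm] at cij
    omega
end

section
/- Under the assumptions i,j ∈ T(S∪{i,j}) and ν_i ≤ ν_j, the inequality ν_i^{|T_i|} · ν_j^{|T_j|} · ∏_{l∈Ĥ} N_l ≥ ν^{|T|} · ν_{ij}^{|T_{ij}|} · ∏_{m∈Ĥ_i} N_m holds, where Ĥ = T∖T_j and Ĥ_i = (T_i∖{i})∖(T_{ij}∖{i,j}). -/
open Finset

lemma mem_Tset {ι : Type*} [DecidableEq ι] {N : ι → ℝ} {ν : Finset ι → ℝ}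
    {A : Finset ι} {k : ι} : k ∈ Tset N ν A ↔ k ∈ A ∧ N k < ν A := Finset.mem_filter

/-- water-filling identity on the active set -/
lemma water_eq {ι : Type*} [DecidableEq ι] (N : ι → ℝ) (ν : Finset ι → ℝ) (P : ℝ)
    (A : Finset ι) (h : ∑ k ∈ A, max (ν A - N k) 0 = P) :
    ν A * (Tset N ν A).card = P + ∑ k ∈ Tset N ν A, N k := by
  have h1 : ∑ k ∈ Tset N ν A, (ν A - N k) = P := by
    rw [← h, Tset, Finset.sum_filter]
    apply Finset.sum_congr rfl
    intro k _
    by_cases hc : N k < ν A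
    · simp [hc, max_eq_left (by linarith : (0:ℝ) ≤ ν A - N k)]
    · simp [hc, max_eq_right (by push_neg at hc; linarith : ν A - N k ≤ (0:ℝ))]
  have h2 : ∑ k ∈ Tset N ν A, (ν A - N k)
      = (Tset N ν A).card * ν A - ∑ k ∈ Tset N ν A, N k := by
    rw [Finset.sum_sub_distrib, Finset.sum_const, nsmul_eq_mul]
  rw [h2] at h1
  linarith

/-- monotonicity of the water level -/
lemma water_mono {ι : Type*} [DecidableEq ι] (N : ι → ℝ) (P : ℝ) (hP : 0 < P)
    (ν : Finset ι → ℝ)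
    (hν : ∀ A : Finset ι, A.Nonempty → ∑ i ∈ A, max (ν A - N i) 0 = P)
    {A B : Finset ι} (hA : A.Nonempty) (hAB : A ⊆ B) : ν B ≤ ν A := by
  by_contra hlt
  push_neg at hlt
  obtain ⟨k₀, hk₀A, hk₀⟩ : ∃ k ∈ A, N k < ν A := by
    by_contra hall
    push_neg at hall
    have hz : ∑ k ∈ A, max (ν A - N k) 0 = 0 :=
      Finset.sum_eq_zero (fun k hk => max_eq_right (by linarith [hall k hk]))
    rw [hν A hA] at hz; linarith
  have hB : B.Nonempty := hA.mono hAB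
  have h1 : ∑ k ∈ A, max (ν B - N k) 0 ≤ ∑ k ∈ B, max (ν B - N k) 0 :=
    Finset.sum_le_sum_of_subset_of_nonneg hAB (fun k _ _ => le_max_right _ _)
  have h2 : ∑ k ∈ A, max (ν A - N k) 0 < ∑ k ∈ A, max (ν B - N k) 0 := by
    apply Finset.sum_lt_sum
    · intro k _; exact max_le_max (by linarith) le_rfl
    · refine ⟨k₀, hk₀A, ?_⟩
      rw [max_eq_left (by linarith : (0:ℝ) ≤ ν A - N k₀),
        max_eq_left (by linarith : (0:ℝ) ≤ ν B - N k₀)]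
      linarith
  have e1 := hν A hA
  have e2 := hν B hB
  linarith

/-- tangent-line bound for log -/
lemma log_tangent {x w : ℝ} (hx : 0 < x) (hw : 0 < w) :
    Real.log x ≤ Real.log w + x / w - 1 := by
  have h := Real.log_le_sub_one_of_pos (show 0 < x / w by positivity)
  rw [Real.log_div hx.ne' hw.ne'] at h
  linarith

set_option maxHeartbeats 1000000 in
/-- The key product inequality, equivalent to the four-set submodularity
inequality `R*(S∪{i}) + R*(S∪{j}) ≥ R*(S) + R*(S∪{i,j})`. -/
theorem stmt_16 {ι : Type*} [DecidableEq ι]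
    (N : ι → ℝ) (hN : ∀ i, 0 < N i) (P : ℝ) (hP : 0 < P)
    (ν : Finset ι → ℝ)
    (hν : ∀ A : Finset ι, A.Nonempty → ∑ i ∈ A, max (ν A - N i) 0 = P)
    (S : Finset ι) (hS : S.Nonempty) (i j : ι) (hij : i ≠ j)
    (hi : i ∉ S) (hj : j ∉ S)
    (hiTij : i ∈ Tset N ν (insert i (insert j S)))
    (hjTij : j ∈ Tset N ν (insert i (insert j S)))
    (hνij : ν (insert i S) ≤ ν (insert j S)) :
    ν S ^ (Tset N ν S).card
      * ν (insert i (insert j S)) ^ (Tset N ν (insert i (insert j S))).card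
      * ∏ m ∈ (Tset N ν (insert i S) \ {i})
            \ (Tset N ν (insert i (insert j S)) \ {i, j}), N m
    ≤ ν (insert i S) ^ (Tset N ν (insert i S)).card
      * ν (insert j S) ^ (Tset N ν (insert j S)).card
      * ∏ l ∈ Tset N ν S \ Tset N ν (insert j S), N l := by
  classical
  -- abbreviations
  set Si := insert i S with hSi
  set Sj := insert j S with hSj
  set Sij := insert i (insert j S) with hSij
  set a := ν Si with ha
  set b := ν Sj with hb
  set c := ν Sij with hc
  set d := ν S with hd
  set T := Tset N ν S with hT
  set Ti := Tset N ν Si with hTi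
  set Tj := Tset N ν Sj with hTj
  set Tij := Tset N ν Sij with hTij
  set A := Tij \ {i, j} with hA
  set B := Ti \ {i} with hB
  set C := Tj \ {j} with hC
  -- basic membership facts
  have hNi : N i < c := (mem_Tset.mp hiTij).2
  have hNj : N j < c := (mem_Tset.mp hjTij).2
  have hc0 : 0 < c := lt_trans (hN i) hNi
  -- monotonicity
  have hSjne : Sj.Nonempty := insert_nonempty _ _
  have hSine : Si.Nonempty := insert_nonempty _ _
  have hca : c ≤ a := water_mono N P hP ν hν hSine (by
    rw [hSi, hSij]; exact insert_subset_insert i (subset_insert j S))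
  have hcb : c ≤ b := water_mono N P hP ν hν hSjne (by
    rw [hSj, hSij]; exact subset_insert i _)
  have hbd : b ≤ d := water_mono N P hP ν hν hS (by rw [hSj]; exact subset_insert j S)
  have hab : a ≤ b := hνij
  have ha0 : 0 < a := lt_of_lt_of_le hc0 hca
  have hb0 : 0 < b := lt_of_lt_of_le ha0 hab
  have hd0 : 0 < d := lt_of_lt_of_le hb0 hbd
  -- memberships
  have hiTi : i ∈ Ti := mem_Tset.mpr ⟨mem_insert_self i S, lt_of_lt_of_le hNi hca⟩
  have hjTj : j ∈ Tj := mem_Tset.mpr ⟨mem_insert_self j S, lt_of_lt_of_le hNj hcb⟩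
  have hjT : j ∉ T := fun h => hj (mem_Tset.mp h).1
  -- chain of subsets A ⊆ B ⊆ C ⊆ T
  have hAB : A ⊆ B := by
    intro k hk
    rw [hA, mem_sdiff, mem_insert, mem_singleton] at hk
    push_neg at hk
    obtain ⟨hkT, hki, hkj⟩ := hk
    have hkmem := mem_Tset.mp hkT
    rw [hB, mem_sdiff, mem_singleton]
    refine ⟨mem_Tset.mpr ⟨?_, lt_of_lt_of_le hkmem.2 hca⟩, hki⟩
    have : k ∈ Sij := hkmem.1
    rw [hSij, mem_insert, mem_insert] at this
    rw [hSi, mem_insert]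
    rcases this with h | h | h
    · exact Or.inl h
    · exact absurd h hkj
    · exact Or.inr h
  have hBC : B ⊆ C := by
    intro k hk
    rw [hB, mem_sdiff, mem_singleton] at hk
    obtain ⟨hkT, hki⟩ := hk
    have hkmem := mem_Tset.mp hkT
    have hkS : k ∈ S := by
      have := hkmem.1; rw [hSi, mem_insert] at this; tauto
    rw [hC, mem_sdiff, mem_singleton]
    exact ⟨mem_Tset.mpr ⟨by rw [hSj]; exact mem_insert_of_mem hkS,
      lt_of_lt_of_le hkmem.2 hab⟩, fun h => hj (h ▸ hkS)⟩
  have hCT : C ⊆ T := by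
    intro k hk
    rw [hC, mem_sdiff, mem_singleton] at hk
    obtain ⟨hkT, hkj⟩ := hk
    have hkmem := mem_Tset.mp hkT
    have hkS : k ∈ S := by
      have := hkmem.1; rw [hSj, mem_insert] at this; tauto
    exact mem_Tset.mpr ⟨hkS, lt_of_lt_of_le hkmem.2 hbd⟩
  -- rewriting the second product set
  have hHset : T \ Tj = T \ C := by
    ext k
    simp only [hC, mem_sdiff, mem_singleton]
    constructor
    · rintro ⟨h1, h2⟩; exact ⟨h1, fun hh => h2 hh.1⟩
    · rintro ⟨h1, h2⟩
      refine ⟨h1, fun hh => ?_⟩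
      have : k ≠ j := fun e => hjT (e ▸ h1)
      exact h2 ⟨hh, this⟩
  -- cardinalities
  have hTi_card : Ti.card = B.card + 1 := by
    rw [hB, ← Finset.erase_eq]
    rw [Finset.card_erase_of_mem hiTi]
    have : 0 < Ti.card := Finset.card_pos.mpr ⟨i, hiTi⟩
    omega
  have hTj_card : Tj.card = C.card + 1 := by
    rw [hC, ← Finset.erase_eq]
    rw [Finset.card_erase_of_mem hjTj]
    have : 0 < Tj.card := Finset.card_pos.mpr ⟨j, hjTj⟩
    omega
  have hA_erase : A = (Tij.erase i).erase j := by
    rw [hA]; ext k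
    simp only [mem_sdiff, mem_insert, mem_singleton, Finset.mem_erase]
    tauto
  have hjTij' : j ∈ Tij.erase i := Finset.mem_erase.mpr ⟨hij.symm, hjTij⟩
  have hTij_card : Tij.card = A.card + 2 := by
    rw [hA_erase, Finset.card_erase_of_mem hjTij', Finset.card_erase_of_mem hiTij]
    have h1 : 0 < Tij.card := Finset.card_pos.mpr ⟨i, hiTij⟩
    have h2 : 1 < Tij.card := Finset.one_lt_card.mpr ⟨i, hiTij, j, hjTij, hij⟩
    omega
  -- sums
  have hTi_sum : ∑ k ∈ Ti, N k = ∑ k ∈ B, N k + N i := by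
    rw [hB, ← Finset.erase_eq, ← Finset.sum_erase_add Ti N hiTi]
  have hTj_sum : ∑ k ∈ Tj, N k = ∑ k ∈ C, N k + N j := by
    rw [hC, ← Finset.erase_eq, ← Finset.sum_erase_add Tj N hjTj]
  have hTij_sum : ∑ k ∈ Tij, N k = ∑ k ∈ A, N k + N j + N i := by
    rw [hA_erase, ← Finset.sum_erase_add Tij N hiTij,
      ← Finset.sum_erase_add (Tij.erase i) N hjTij']
  -- water-filling identities
  have e1 : a * (Ti.card : ℝ) = P + ∑ k ∈ Ti, N k := water_eq N ν P Si (hν Si hSine)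
  have e2 : b * (Tj.card : ℝ) = P + ∑ k ∈ Tj, N k := water_eq N ν P Sj (hν Sj hSjne)
  have e3 : c * (Tij.card : ℝ) = P + ∑ k ∈ Tij, N k :=
    water_eq N ν P Sij (hν Sij (insert_nonempty _ _))
  have e4 : d * (T.card : ℝ) = P + ∑ k ∈ T, N k := water_eq N ν P S (hν S hS)
  -- split sums over difference sets
  have sB : ∑ k ∈ B \ A, N k + ∑ k ∈ A, N k = ∑ k ∈ B, N k := Finset.sum_sdiff hAB
  have sD : ∑ k ∈ T \ C, N k + ∑ k ∈ C, N k = ∑ k ∈ T, N k := Finset.sum_sdiff hCT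
  -- recast
  rw [hTi_card, hTi_sum] at e1
  rw [hTj_card, hTj_sum] at e2
  rw [hTij_card, hTij_sum] at e3
  push_cast at e1 e2 e3
  have e1' : a * ((B.card : ℝ) + 1) = P + (∑ k ∈ B, N k + N i) := by linarith only [e1]
  have e2' : b * ((C.card : ℝ) + 1) = P + (∑ k ∈ C, N k + N j) := by linarith only [e2]
  have e3' : c * ((A.card : ℝ) + 2) = P + (∑ k ∈ A, N k + N i + N j) := by linarith only [e3]
  have I1 : ∑ k ∈ B \ A, N k = a * ((B.card : ℝ) + 1) - c * ((A.card : ℝ) + 2) + N j := by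
    linarith only [e1', e3', sB]
  have I2 : ∑ k ∈ T \ C, N k = d * (T.card : ℝ) + N j - b * ((C.card : ℝ) + 1) := by
    linarith only [e4, e2', sD]
  -- cardinalities of difference sets as reals
  have mBA : ((B \ A).card : ℝ) = (B.card : ℝ) - A.card := by
    rw [Finset.card_sdiff_of_subset hAB, Nat.cast_sub (Finset.card_le_card hAB)]
  have nDC : ((T \ C).card : ℝ) = (T.card : ℝ) - C.card := by
    rw [Finset.card_sdiff_of_subset hCT, Nat.cast_sub (Finset.card_le_card hCT)]
  -- nonnegative pieces
  have F1 : (0:ℝ) ≤ ((A.card : ℝ) + 2) * ((Real.log a - Real.log c) + c / a - 1) :=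
    mul_nonneg (by positivity)
      (by have h := log_tangent hc0 ha0; linarith only [h])
  have F2 : ∑ k ∈ B \ A, Real.log (N k)
      ≤ ((B \ A).card : ℝ) * Real.log a + (∑ k ∈ B \ A, N k) / a - ((B \ A).card : ℝ) := by
    have hle : ∀ k ∈ B \ A, Real.log (N k) ≤ Real.log a + N k / a - 1 := by
      intro k _
      exact log_tangent (hN k) ha0
    calc ∑ k ∈ B \ A, Real.log (N k) ≤ ∑ k ∈ B \ A, (Real.log a + N k / a - 1) :=
          Finset.sum_le_sum hle
      _ = ((B \ A).card : ℝ) * Real.log a + (∑ k ∈ B \ A, N k) / a - ((B \ A).card : ℝ) := by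
          rw [Finset.sum_sub_distrib, Finset.sum_add_distrib, Finset.sum_const,
            Finset.sum_const, ← Finset.sum_div, nsmul_eq_mul, nsmul_eq_mul]
          ring
  have F3 : N j / a - N j / b ≤ Real.log b - Real.log a := by
    have h1 := log_tangent ha0 hb0
    have hNja : N j ≤ a := le_of_lt (lt_of_lt_of_le hNj hca)
    have e2 : (b - a) / b = 1 - a / b := by rw [sub_div, div_self hb0.ne']
    have key : N j / a - N j / b ≤ 1 - a / b := by
      rw [div_sub_div _ _ ha0.ne' hb0.ne', ← e2,
        div_le_div_iff₀ (by positivity) hb0]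
      linarith only [mul_nonneg (mul_nonneg hb0.le (sub_nonneg.mpr hab))
        (sub_nonneg.mpr hNja)]
    linarith only [h1, key]
  have F4 : ((T \ C).card : ℝ) * Real.log d + (∑ k ∈ T \ C, N k) / b
        - ((T \ C).card : ℝ) * (d / b) ≤ ∑ k ∈ T \ C, Real.log (N k) := by
    have hge : ∀ k ∈ T \ C, Real.log d + N k / b - d / b ≤ Real.log (N k) := by
      intro k hk
      rw [mem_sdiff] at hk
      obtain ⟨hkT, hkC⟩ := hk
      have hkmem := mem_Tset.mp hkT
      have hkd : N k < d := hkmem.2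
      have hkb : b ≤ N k := by
        by_contra hcon
        push_neg at hcon
        apply hkC
        rw [hC, mem_sdiff, mem_singleton]
        have hkj : k ≠ j := fun e => hj (e ▸ hkmem.1)
        exact ⟨mem_Tset.mpr ⟨by rw [hSj]; exact mem_insert_of_mem hkmem.1, hcon⟩, hkj⟩
      have h1 := log_tangent hd0 (hN k)
      -- log d ≤ log N k + d / N k - 1, need  d / N k - 1 ≤ d/b - N k / b
      have ee1 : (d - N k) / N k = d / N k - 1 := by
        rw [sub_div, div_self (hN k).ne']
      have ee2 : (d - N k) / b = d / b - N k / b := sub_div _ _ _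
      have h2 : (d - N k) / N k ≤ (d - N k) / b := by
        rw [div_le_div_iff₀ (hN k) hb0]
        linarith only [mul_nonneg (sub_nonneg.mpr hkd.le) (sub_nonneg.mpr hkb)]
      linarith only [h1, ee1, ee2, h2]
    calc ((T \ C).card : ℝ) * Real.log d + (∑ k ∈ T \ C, N k) / b
          - ((T \ C).card : ℝ) * (d / b)
        = ∑ k ∈ T \ C, (Real.log d + N k / b - d / b) := by
          rw [Finset.sum_sub_distrib, Finset.sum_add_distrib, Finset.sum_const,
            Finset.sum_const, ← Finset.sum_div, nsmul_eq_mul, nsmul_eq_mul]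
          try ring
      _ ≤ ∑ k ∈ T \ C, Real.log (N k) := Finset.sum_le_sum hge
  have F5 : (C.card : ℝ) * (Real.log d + 1 - d / b) ≤ (C.card : ℝ) * Real.log b :=
    mul_le_mul_of_nonneg_left
      (by have h1 := log_tangent hd0 hb0; linarith only [h1]) (by positivity)
  have ha' : a ≠ 0 := ha0.ne'
  have hb' : b ≠ 0 := hb0.ne'
  have J1 : (∑ k ∈ B \ A, N k) / a
      = ((B.card : ℝ) + 1) - (c * ((A.card : ℝ) + 2)) / a + N j / a := by
    rw [I1]
    field_simp
    try ring
  have J2 : (∑ k ∈ T \ C, N k) / b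
      = (d * (T.card : ℝ)) / b + N j / b - ((C.card : ℝ) + 1) := by
    rw [I2]
    field_simp
    try ring
  -- the key log inequality
  have Lgoal : (T.card : ℝ) * Real.log d + ((A.card : ℝ) + 2) * Real.log c
        + ∑ k ∈ B \ A, Real.log (N k)
      ≤ ((B.card : ℝ) + 1) * Real.log a + ((C.card : ℝ) + 1) * Real.log b
        + ∑ k ∈ T \ C, Real.log (N k) := by
    have key : ((B.card : ℝ) + 1) * Real.log a + ((C.card : ℝ) + 1) * Real.log b
          - ((T.card : ℝ) * Real.log d + ((A.card : ℝ) + 2) * Real.log c)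
        = ((A.card : ℝ) + 2) * ((Real.log a - Real.log c) + c / a - 1)
          + (((B \ A).card : ℝ) * Real.log a + (∑ k ∈ B \ A, N k) / a - ((B \ A).card : ℝ))
          + ((Real.log b - Real.log a) - (N j / a - N j / b))
          - (((T \ C).card : ℝ) * Real.log d + (∑ k ∈ T \ C, N k) / b
              - ((T \ C).card : ℝ) * (d / b))
          + (C.card : ℝ) * (Real.log b - (Real.log d + 1 - d / b)) := by
      rw [mBA, nDC, J1, J2]
      ring
    linarith only [F1, F2, F3, F4, F5, key]
  -- convert to products
  have hXpos : 0 < d ^ T.card * c ^ Tij.card * ∏ m ∈ B \ A, N m := by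
    have : 0 < ∏ m ∈ B \ A, N m := Finset.prod_pos (fun k _ => hN k)
    positivity
  have hYpos : 0 < a ^ Ti.card * b ^ Tj.card * ∏ l ∈ T \ C, N l := by
    have : 0 < ∏ l ∈ T \ C, N l := Finset.prod_pos (fun k _ => hN k)
    positivity
  rw [hHset]
  rw [← Real.log_le_log_iff hXpos hYpos]
  rw [Real.log_mul (by positivity) (Finset.prod_pos (fun k _ => hN k)).ne',
    Real.log_mul (by positivity) (by positivity),
    Real.log_mul (by positivity) (Finset.prod_pos (fun k _ => hN k)).ne',
    Real.log_mul (by positivity) (by positivity),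
    Real.log_pow, Real.log_pow, Real.log_pow, Real.log_pow,
    Real.log_prod (fun k _ => (hN k).ne'),
    Real.log_prod (fun k _ => (hN k).ne')]
  have hc1 : ((Tij.card : ℝ)) = (A.card : ℝ) + 2 := by rw [hTij_card]; push_cast; ring
  have hc2 : ((Ti.card : ℝ)) = (B.card : ℝ) + 1 := by rw [hTi_card]; push_cast; ring
  have hc3 : ((Tj.card : ℝ)) = (C.card : ℝ) + 1 := by rw [hTj_card]; push_cast; ring
  rw [hc1, hc2, hc3]
  exact Lgoal
end
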